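/- Let K_X ⪰ 0 with det(K_X) = 0 (K_X singular), H_M*H_M ≻ 0. Then −1 is an eigenvalue of J = −(H_MK_XH_M*+I)⁻¹(H_MK_XH_E*H_E(H_M*H_M)⁻¹H_M* + I); indeed J + I = −(H_MK_XH_M*+I)⁻¹H_MK_X(H_E*H_E(H_M*H_M)⁻¹ − I)H_M*, which is singular when n_M ≥ n and K_X is singular. -/

import Mathlib

open Matrix
open scoped ComplexOrder

lemma aux_posDef_add_psd {n : ℕ} {A B : Matrix (Fin n) (Fin n) ℂ}
    (hA : A.PosSemidef) (hB : B.PosDef) : (A + B).PosDef := by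
  refine ⟨hA.1.add hB.1, fun x hx => ?_⟩
  have h1 := hA.2 x
  have h2 := hB.2 (x := x) hx
  simpa [mul_add, add_mul] using add_pos_of_nonneg_of_pos h1 h2

lemma aux_rank_lt_of_det_zero {n : ℕ} {K : Matrix (Fin n) (Fin n) ℂ}
    (h : K.det = 0) : K.rank < n := by
  obtain ⟨v, hv, hKv⟩ := (Matrix.exists_mulVec_eq_zero_iff).mpr h
  have hker : 0 < Module.finrank ℂ (LinearMap.ker K.mulVecLin) := by
    rw [Module.finrank_pos_iff]
    exact ⟨⟨⟨v, by simpa [Matrix.mulVecLin] using hKv⟩, 0, by simpa using hv⟩⟩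
  have hrn := LinearMap.finrank_range_add_finrank_ker K.mulVecLin
  have hfin : Module.finrank ℂ (Fin n → ℂ) = n := by simp
  rw [hfin] at hrn
  have hr : K.rank = Module.finrank ℂ (LinearMap.range K.mulVecLin) := rfl
  omega

/-- Let K_X ⪰ 0 be singular and H_M*H_M ≻ 0, H_E*H_E ≻ 0. Then for
J = −(H_MK_XH_M*+1)⁻¹(H_MK_XH_E*H_E(H_M*H_M)⁻¹H_M* + 1) we have
J + I = −(H_MK_XH_M*+1)⁻¹H_MK_X(H_E*H_E(H_M*H_M)⁻¹ − 1)H_M*, which is singular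
when n_M ≥ n (so −1 is an eigenvalue of J). -/
theorem stmt_15 {n nM nE : ℕ}
    (HM : Matrix (Fin nM) (Fin n) ℂ) (HE : Matrix (Fin nE) (Fin n) ℂ)
    (KX : Matrix (Fin n) (Fin n) ℂ) (hK : KX.PosSemidef) (hKsing : KX.det = 0)
    (hM : (HMᴴ * HM).PosDef) (hE : (HEᴴ * HE).PosDef)
    (J : Matrix (Fin nM) (Fin nM) ℂ)
    (hJ : J = -(HM * KX * HMᴴ + 1)⁻¹ * (HM * KX * HEᴴ * HE * (HMᴴ * HM)⁻¹ * HMᴴ + 1)) :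
    J + 1 = -(HM * KX * HMᴴ + 1)⁻¹ * (HM * KX *
        (HEᴴ * HE * (HMᴴ * HM)⁻¹ - 1) * HMᴴ) ∧
      (n ≤ nM → (J + 1).det = 0) := by
  have hApd : (HM * KX * HMᴴ + 1).PosDef :=
    aux_posDef_add_psd (hK.mul_mul_conjTranspose_same HM) Matrix.PosDef.one
  have hAinv : (HM * KX * HMᴴ + 1)⁻¹ * (HM * KX * HMᴴ + 1) = 1 :=
    Matrix.nonsing_inv_mul _ hApd.det_pos.ne'.isUnit
  have key : (HM * KX * HMᴴ + 1) - (HM * KX * HEᴴ * HE * (HMᴴ * HM)⁻¹ * HMᴴ + 1) =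
      -(HM * KX * (HEᴴ * HE * (HMᴴ * HM)⁻¹ - 1) * HMᴴ) := by
    simp only [Matrix.mul_sub, Matrix.sub_mul, Matrix.mul_one, Matrix.mul_assoc]
    abel
  have h1 : J + 1 = -(HM * KX * HMᴴ + 1)⁻¹ * (HM * KX *
      (HEᴴ * HE * (HMᴴ * HM)⁻¹ - 1) * HMᴴ) := by
    rw [hJ]
    have step : -(HM * KX * HMᴴ + 1)⁻¹ * (HM * KX * HEᴴ * HE * (HMᴴ * HM)⁻¹ * HMᴴ + 1) + 1 =
        (HM * KX * HMᴴ + 1)⁻¹ * ((HM * KX * HMᴴ + 1) -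
          (HM * KX * HEᴴ * HE * (HMᴴ * HM)⁻¹ * HMᴴ + 1)) := by
      rw [Matrix.mul_sub, hAinv, Matrix.neg_mul]
      abel
    rw [step, key, Matrix.mul_neg, ← Matrix.neg_mul]
  refine ⟨h1, fun hn => ?_⟩
  have h2 : J + 1 = (-(HM * KX * HMᴴ + 1)⁻¹ * HM * KX) *
      ((HEᴴ * HE * (HMᴴ * HM)⁻¹ - 1) * HMᴴ) := by
    rw [h1]; simp only [Matrix.neg_mul, Matrix.mul_assoc]
  have hrank : (J + 1).rank < nM := by
    calc (J + 1).rank ≤ (-(HM * KX * HMᴴ + 1)⁻¹ * HM * KX).rank := by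
          rw [h2]; exact Matrix.rank_mul_le_left _ _
      _ ≤ KX.rank := Matrix.rank_mul_le_right _ _
      _ < n := aux_rank_lt_of_det_zero hKsing
      _ ≤ nM := hn
  by_contra hdet
  have : (J + 1).rank = nM := by
    simpa using Matrix.rank_of_isUnit _ ((Matrix.isUnit_iff_isUnit_det _).mpr (Ne.isUnit hdet))
  omega
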